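/- Let K be a field, K[X] = K[x_1,…,x_n], L ⊆ T^n an order ideal, and I ⊆ K[X] a zero-dimensional ideal. Let Ĩ ⊆ ⟨L⟩_K be a K-subspace with Ĩ^+ ∩ ⟨L⟩_K = Ĩ and such that the ideal generated by Ĩ equals I. If O is an order ideal such that ⟨L⟩_K = Ĩ ⊕ ⟨O⟩_K as K-vector spaces and ∂O ⊆ L, then O supports a border basis of I, i.e., K[X] = I ⊕ ⟨O⟩_K as K-vector spaces. -/

import Mathlib

open MvPolynomial

/-- An order ideal: a finite set of monomials (represented by their exponent
vectors) closed under divisibility (`t' ∣ t` corresponds to `t' ≤ t`). -/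
def IsOrderIdeal {n : ℕ} (O : Finset (Fin n →₀ ℕ)) : Prop :=
  ∀ t ∈ O, ∀ t' : Fin n →₀ ℕ, t' ≤ t → t' ∈ O

/-- The border `∂O = {x_j · t : j, t ∈ O} \ O` of an order ideal, with the
convention `∂∅ = {1}`. -/
def border {n : ℕ} (O : Finset (Fin n →₀ ℕ)) : Set (Fin n →₀ ℕ) :=
  if O.Nonempty then
    {b | (∃ j : Fin n, ∃ t ∈ O, b = t + Finsupp.single j 1) ∧ b ∉ O}
  else {0}

/-- The `K`-vector subspace of `K[X]` spanned by a set of monomials. -/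
noncomputable def monSpan (K : Type*) [Field K] {n : ℕ} (O : Set (Fin n →₀ ℕ)) :
    Submodule K (MvPolynomial (Fin n) K) :=
  Submodule.span K ((fun m => (monomial m (1 : K))) '' O)

/-- The neighborhood extension `V⁺ = V + x_1·V + ⋯ + x_n·V` of a `K`-subspace
of `K[X]`. -/
noncomputable def nbExt {n : ℕ} {K : Type*} [Field K]
    (V : Submodule K (MvPolynomial (Fin n) K)) : Submodule K (MvPolynomial (Fin n) K) :=
  V ⊔ ⨆ j : Fin n, V.map (LinearMap.mulLeft K (X j : MvPolynomial (Fin n) K))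

section Aux
variable {n : ℕ} {K : Type*} [Field K]

lemma monomial_mem_monSpan {S : Set (Fin n →₀ ℕ)} {t : Fin n →₀ ℕ} (h : t ∈ S) :
    monomial t (1:K) ∈ monSpan K S :=
  Submodule.subset_span ⟨t, h, rfl⟩

lemma support_subset_of_mem_monSpan {S : Set (Fin n →₀ ℕ)} {f : MvPolynomial (Fin n) K}
    (hf : f ∈ monSpan K S) : ↑f.support ⊆ S := by
  induction hf using Submodule.span_induction with
  | mem x h => obtain ⟨m, hm, rfl⟩ := h
               exact (Finset.coe_subset.2 (support_monomial_subset)).trans (by simpa)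
  | zero => simp
  | add x y hx hy ihx ihy =>
      exact (Finset.coe_subset.2 (MvPolynomial.support_add)).trans
        (by rw [Finset.coe_union]; exact Set.union_subset ihx ihy)
  | smul a x hx ih => exact (Finset.coe_subset.2 (MvPolynomial.support_smul)).trans ih

lemma X_mul_monomial' (j : Fin n) (t : Fin n →₀ ℕ) :
    (X j : MvPolynomial (Fin n) K) * monomial t 1 = monomial (t + Finsupp.single j 1) 1 := by
  rw [X, monomial_mul, one_mul, add_comm]

end Aux

set_option maxHeartbeats 4000000
set_option synthInstance.maxHeartbeats 400000

/-- let `Ĩ ⊆ ⟨L⟩_K` be an `L`-stabilized subspace generating the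
zero-dimensional ideal `I`. If `O` is an order ideal with
`⟨L⟩_K = Ĩ ⊕ ⟨O⟩_K` and `∂O ⊆ L`, then `O` supports a border basis of `I`,
i.e. `K[X] = I ⊕ ⟨O⟩_K`. -/
theorem supports_borderBasis_of_stable_approx {n : ℕ} {K : Type*} [Field K]
    (L O : Finset (Fin n →₀ ℕ)) (hL : IsOrderIdeal L) (hO : IsOrderIdeal O)
    (I : Ideal (MvPolynomial (Fin n) K))
    (hI : FiniteDimensional K (MvPolynomial (Fin n) K ⧸ I))
    (It : Submodule K (MvPolynomial (Fin n) K))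
    (hItL : It ≤ monSpan K (L : Set (Fin n →₀ ℕ)))
    (hstab : nbExt It ⊓ monSpan K (L : Set (Fin n →₀ ℕ)) = It)
    (hgen : Ideal.span (It : Set (MvPolynomial (Fin n) K)) = I)
    (hdisj : It ⊓ monSpan K (O : Set (Fin n →₀ ℕ)) = ⊥)
    (hsum : It ⊔ monSpan K (O : Set (Fin n →₀ ℕ)) = monSpan K (L : Set (Fin n →₀ ℕ)))
    (hborder : border O ⊆ (L : Set (Fin n →₀ ℕ))) :
    IsCompl (Submodule.restrictScalars K I) (monSpan K (O : Set (Fin n →₀ ℕ))) := by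
  classical
  rcases O.eq_empty_or_nonempty with hOe | hOne
  · -- degenerate case O = ∅ : then I = ⊤
    subst hOe
    have hOb : monSpan K ((∅ : Finset (Fin n →₀ ℕ)) : Set (Fin n →₀ ℕ)) = ⊥ := by
      simp [monSpan]
    have h0L : (0 : Fin n →₀ ℕ) ∈ L := by
      have : (0 : Fin n →₀ ℕ) ∈ border (∅ : Finset (Fin n →₀ ℕ)) := by
        simp [border]
      exact_mod_cast hborder this
    have h1It : (1 : MvPolynomial (Fin n) K) ∈ It := by
      rw [hOb, sup_bot_eq] at hsum
      rw [hsum]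
      have := monomial_mem_monSpan (K := K) (S := (L : Set (Fin n →₀ ℕ)))
        (t := 0) (by exact_mod_cast h0L)
      rwa [monomial_zero', C_1] at this
    have hItop : I = ⊤ := by
      rw [← hgen, Ideal.eq_top_iff_one]
      exact Ideal.subset_span h1It
    rw [hItop, hOb]
    simpa using isCompl_top_bot
  -- main case
  have h0O : (0 : Fin n →₀ ℕ) ∈ O := by
    obtain ⟨t, ht⟩ := hOne
    exact hO t ht 0 zero_le
  have hVOVL : monSpan K (O : Set (Fin n →₀ ℕ)) ≤ monSpan K (L : Set (Fin n →₀ ℕ)) :=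
    hsum ▸ le_sup_right
  have hOL : ∀ t ∈ O, t ∈ L := by
    intro t ht
    have h1 : monomial t (1:K) ∈ monSpan K (L : Set (Fin n →₀ ℕ)) :=
      hVOVL (monomial_mem_monSpan (by exact_mod_cast ht))
    have h2 := support_subset_of_mem_monSpan h1
    have : t ∈ (monomial t (1:K)).support := by
      rw [support_monomial, if_neg (one_ne_zero)]; simp
    exact_mod_cast h2 this
  have hXO : ∀ (j : Fin n), ∀ f ∈ monSpan K (O : Set (Fin n →₀ ℕ)),
      (X j : MvPolynomial (Fin n) K) * f ∈ monSpan K (L : Set (Fin n →₀ ℕ)) := by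
    intro j f hf
    induction hf using Submodule.span_induction with
    | mem x h =>
        obtain ⟨m, hm, rfl⟩ := h
        rw [X_mul_monomial']
        apply monomial_mem_monSpan
        by_cases hmem : m + Finsupp.single j 1 ∈ O
        · exact_mod_cast hOL _ hmem
        · apply hborder
          rw [border, if_pos hOne]
          exact ⟨⟨j, m, by exact_mod_cast hm, rfl⟩, hmem⟩
    | zero => simp
    | add x y hx hy ihx ihy => rw [mul_add]; exact Submodule.add_mem _ ihx ihy
    | smul a x hx ih => rw [mul_smul_comm]; exact Submodule.smul_mem _ _ ih
  set VL := monSpan K (L : Set (Fin n →₀ ℕ)) with hVLdef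
  set VO := monSpan K (O : Set (Fin n →₀ ℕ)) with hVOdef
  -- complementarity inside VL
  have hcompl : IsCompl (VO.comap VL.subtype) (It.comap VL.subtype) := by
    constructor
    · rw [disjoint_iff, eq_bot_iff]
      rintro ⟨x, hxL⟩ ⟨hx1, hx2⟩
      have hx : x ∈ It ⊓ VO := ⟨hx2, hx1⟩
      rw [hdisj] at hx
      have hx0 : x = 0 := by simpa using hx
      rw [Submodule.mem_bot]
      exact Subtype.ext hx0
    · rw [codisjoint_iff, eq_top_iff]
      rintro ⟨x, hxL⟩ -
      have hx : x ∈ It ⊔ VO := hsum ▸ hxL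
      obtain ⟨a, ha, b, hb, hab⟩ := Submodule.mem_sup.1 hx
      refine Submodule.mem_sup.2 ⟨⟨b, hVOVL hb⟩, hb, ⟨a, hItL ha⟩, ha, ?_⟩
      exact Subtype.ext ((add_comm b a).trans hab)
  set π₀ := Submodule.projectionOnto _ _ hcompl with hπ₀def
  set π : VL →ₗ[K] MvPolynomial (Fin n) K :=
    VL.subtype ∘ₗ (VO.comap VL.subtype).subtype ∘ₗ π₀ with hπdef
  have hπVO : ∀ x : VL, π x ∈ VO := fun x => (π₀ x).2
  have hπIt : ∀ x : VL, (x : MvPolynomial (Fin n) K) - π x ∈ It := by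
    intro x
    have h1 : π₀ (x - ((π₀ x : VL))) = 0 := by
      rw [map_sub, Submodule.linearProjOfIsCompl_apply_left hcompl (π₀ x), sub_self]
    have h2 := (Submodule.linearProjOfIsCompl_apply_eq_zero_iff hcompl).1 h1
    simpa [π] using h2
  have hπid : ∀ x : VL, (x : MvPolynomial (Fin n) K) ∈ VO → π x = x := by
    intro x hx
    have h1 : (x : MvPolynomial (Fin n) K) - π x ∈ It := hπIt x
    have h2 : (x : MvPolynomial (Fin n) K) - π x ∈ VO := sub_mem hx (hπVO x)
    have h3 : (x : MvPolynomial (Fin n) K) - π x ∈ It ⊓ VO := ⟨h1, h2⟩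
    rw [hdisj] at h3
    exact (sub_eq_zero.1 ((Submodule.mem_bot K).1 h3)).symm
  -- multiplication endomorphisms of VO
  set M : Fin n → Module.End K VO := fun j =>
    (LinearMap.codRestrict VO π hπVO) ∘ₗ
      (LinearMap.codRestrict VL (LinearMap.mulLeft K (X j) ∘ₗ VO.subtype)
        (fun o => hXO j (o : MvPolynomial (Fin n) K) o.2)) with hMdef
  have hMval : ∀ (j : Fin n) (o : VO),
      ((M j o : MvPolynomial (Fin n) K)) = π ⟨X j * (o : MvPolynomial (Fin n) K),
        hXO j _ o.2⟩ := by
    intro j o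
    rfl
  have hbra : ∀ (j : Fin n) (o : VO),
      (X j : MvPolynomial (Fin n) K) * (o : MvPolynomial (Fin n) K)
        - ((M j o : MvPolynomial (Fin n) K)) ∈ It := by
    intro j o
    rw [hMval]
    exact hπIt ⟨X j * (o : MvPolynomial (Fin n) K), hXO j _ o.2⟩
  have hIt_le : It ≤ nbExt It := le_sup_left
  have hmul_mem : ∀ (j : Fin n) (x : MvPolynomial (Fin n) K), x ∈ It →
      (X j : MvPolynomial (Fin n) K) * x ∈ nbExt It := by
    intro j x hx
    have h1 : It.map (LinearMap.mulLeft K (X j : MvPolynomial (Fin n) K)) ≤ nbExt It :=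
      le_sup_of_le_right (le_iSup (fun j => It.map (LinearMap.mulLeft K (X j : MvPolynomial (Fin n) K))) j)
    exact h1 ⟨x, hx, rfl⟩
  have hbra2 : ∀ (i j : Fin n) (o : VO),
      (X i : MvPolynomial (Fin n) K) * ((X j : MvPolynomial (Fin n) K) * (o : MvPolynomial (Fin n) K))
        - ((M i (M j o) : MvPolynomial (Fin n) K)) ∈ nbExt It := by
    intro i j o
    have e : (X i : MvPolynomial (Fin n) K) * ((X j) * (o : MvPolynomial (Fin n) K))
        - ((M i (M j o) : MvPolynomial (Fin n) K))
        = X i * ((X j) * (o : MvPolynomial (Fin n) K) - ((M j o : MvPolynomial (Fin n) K)))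
          + ((X i) * ((M j o : MvPolynomial (Fin n) K)) - ((M i (M j o) : MvPolynomial (Fin n) K))) := by
      ring
    rw [e]
    exact add_mem (hmul_mem i _ (hbra j o)) (hIt_le (hbra i (M j o)))
  have hcommM : ∀ i j : Fin n, M i * M j = M j * M i := by
    intro i j
    apply LinearMap.ext
    intro o
    rw [Module.End.mul_apply, Module.End.mul_apply]
    have hd : ((M i (M j o) : MvPolynomial (Fin n) K)) - ((M j (M i o) : MvPolynomial (Fin n) K)) ∈ nbExt It := by
      have h1 := hbra2 i j o
      have h2 := hbra2 j i o
      have e : ((M i (M j o) : MvPolynomial (Fin n) K)) - ((M j (M i o) : MvPolynomial (Fin n) K))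
          = ((X j : MvPolynomial (Fin n) K) * ((X i) * (o : MvPolynomial (Fin n) K)) - ((M j (M i o) : MvPolynomial (Fin n) K)))
            - ((X i : MvPolynomial (Fin n) K) * ((X j) * (o : MvPolynomial (Fin n) K)) - ((M i (M j o) : MvPolynomial (Fin n) K))) := by
        ring
      rw [e]
      exact sub_mem h2 h1
    have hdL : ((M i (M j o) : MvPolynomial (Fin n) K)) - ((M j (M i o) : MvPolynomial (Fin n) K)) ∈ VL :=
      sub_mem (hVOVL (M i (M j o)).2) (hVOVL (M j (M i o)).2)
    have hmem : ((M i (M j o) : MvPolynomial (Fin n) K)) - ((M j (M i o) : MvPolynomial (Fin n) K)) ∈ It ⊓ VO := by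
      constructor
      · rw [← hstab]; exact ⟨hd, hdL⟩
      · exact sub_mem (M i (M j o)).2 (M j (M i o)).2
    rw [hdisj, Submodule.mem_bot] at hmem
    have : ((M i (M j o) : MvPolynomial (Fin n) K)) = ((M j (M i o) : MvPolynomial (Fin n) K)) :=
      sub_eq_zero.1 hmem
    exact Subtype.ext this
  clear hMval hbra2 hMdef
  clear_value M
  clear hπVO hπIt hπid hπdef
  clear π
  clear hπ₀def
  clear π₀
  clear hcompl
  -- commutative subalgebra generated by the M j, and evaluation
  letI : CommSemiring (Algebra.adjoin K (Set.range M)) :=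
    Algebra.adjoinCommSemiringOfComm K (by rintro a ⟨i, rfl⟩ b ⟨j, rfl⟩; exact hcommM i j)
  set ev : MvPolynomial (Fin n) K →ₐ[K] Algebra.adjoin K (Set.range M) :=
    aeval (fun j => (⟨M j, Algebra.subset_adjoin ⟨j, rfl⟩⟩ : Algebra.adjoin K (Set.range M)))
    with hevdef
  have h1VO : (1 : MvPolynomial (Fin n) K) ∈ VO := by
    have := monomial_mem_monSpan (K := K) (S := (O : Set (Fin n →₀ ℕ))) (t := 0)
      (by exact_mod_cast h0O)
    rwa [monomial_zero', C_1] at this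
  set oneO : VO := ⟨1, h1VO⟩ with honeO
  set Φ : MvPolynomial (Fin n) K → VO := fun f => (ev f).val oneO with hΦdef
  have hΦadd : ∀ f g, Φ (f + g) = Φ f + Φ g := by
    intro f g; simp [hΦdef, map_add]
  have hΦsmul : ∀ (a : K) f, Φ (a • f) = a • Φ f := by
    intro a f; simp [hΦdef, map_smul]
  have hΦzero : Φ 0 = 0 := by simp [hΦdef, map_zero]
  have hΦmul : ∀ f g, Φ (f * g) = (ev f).val (Φ g) := by
    intro f g; simp [hΦdef, map_mul, Module.End.mul_apply]
  have hΦX : ∀ (j : Fin n) (f : MvPolynomial (Fin n) K), Φ (X j * f) = M j (Φ f) := by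
    intro j f
    rw [hΦmul]
    congr 1
    rw [hevdef, aeval_X]
  have hΦone : Φ 1 = oneO := by simp [hΦdef, map_one]
  -- key lemma
  have key : ∀ (d : ℕ) (t : Fin n →₀ ℕ), t ∈ L → (t.sum fun _ k => k) = d →
      (monomial t 1 : MvPolynomial (Fin n) K) - ((Φ (monomial t 1) : VO) : MvPolynomial (Fin n) K) ∈ It := by
    intro d
    induction d using Nat.strong_induction_on with
    | _ d ih =>
      intro t htL htd
      by_cases ht0 : t = 0
      · subst ht0
        rw [monomial_zero', C_1, hΦone]
        have : ((oneO : VO) : MvPolynomial (Fin n) K) = 1 := rfl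
        rw [this, sub_self]
        exact zero_mem It
      · obtain ⟨j, hj⟩ : ∃ j, t j ≠ 0 := by
          by_contra hcon
          push_neg at hcon
          exact ht0 (Finsupp.ext hcon)
        set t' := t - Finsupp.single j 1 with ht'def
        have htt' : t' + Finsupp.single j 1 = t := by
          ext i
          rw [Finsupp.add_apply, ht'def, Finsupp.tsub_apply, Finsupp.single_apply]
          by_cases hij : j = i
          · subst hij
            have : 1 ≤ t j := Nat.one_le_iff_ne_zero.2 hj
            simp
            omega
          · simp [hij]
        have ht'L : t' ∈ L := hL t htL t' (by rw [ht'def]; exact tsub_le_self)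
        have hd' : (t'.sum fun _ k => k) + 1 = d := by
          rw [← htd, ← htt', Finsupp.sum_add_index' (fun _ => rfl) (fun _ _ _ => rfl),
            Finsupp.sum_single_index rfl]
        have hIH := ih (t'.sum fun _ k => k) (by omega) t' ht'L rfl
        have hmon : (monomial t (1:K) : MvPolynomial (Fin n) K) = X j * monomial t' 1 := by
          rw [X_mul_monomial', htt']
        rw [hmon, hΦX j]
        set o := Φ (monomial t' 1) with ho
        have h1 : (X j : MvPolynomial (Fin n) K) *
            ((monomial t' 1 : MvPolynomial (Fin n) K) - (o : MvPolynomial (Fin n) K)) ∈ nbExt It :=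
          hmul_mem j _ hIH
        have h2 := hbra j o
        have hsplit : (X j : MvPolynomial (Fin n) K) * monomial t' 1 - ((M j o : VO) : MvPolynomial (Fin n) K)
            = X j * ((monomial t' 1 : MvPolynomial (Fin n) K) - (o : MvPolynomial (Fin n) K))
              + (X j * (o : MvPolynomial (Fin n) K) - ((M j o : VO) : MvPolynomial (Fin n) K)) := by
          ring
        have hnb : (X j : MvPolynomial (Fin n) K) * monomial t' 1 - ((M j o : VO) : MvPolynomial (Fin n) K) ∈ nbExt It := by
          rw [hsplit]; exact add_mem h1 (hIt_le h2)
        have hmemL : (X j : MvPolynomial (Fin n) K) * monomial t' 1 - ((M j o : VO) : MvPolynomial (Fin n) K) ∈ VL := by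
          apply sub_mem _ (hVOVL (M j o).2)
          rw [← hmon]
          exact monomial_mem_monSpan (by exact_mod_cast htL)
        rw [← hstab]
        exact ⟨hnb, hmemL⟩
  -- Φ is the identity on VO and kills It (hence I)
  have hψ : ∀ f ∈ VL, f - ((Φ f : VO) : MvPolynomial (Fin n) K) ∈ It := by
    intro f hf
    induction hf using Submodule.span_induction with
    | mem x h =>
        obtain ⟨m, hm, rfl⟩ := h
        exact key (m.sum fun _ k => k) m (by exact_mod_cast hm) rfl
    | zero => rw [hΦzero]; simp
    | add x y hx hy ihx ihy =>
        rw [hΦadd, Submodule.coe_add]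
        have e : x + y - (((Φ x : VO) : MvPolynomial (Fin n) K) + ((Φ y : VO) : MvPolynomial (Fin n) K))
            = (x - ((Φ x : VO) : MvPolynomial (Fin n) K)) + (y - ((Φ y : VO) : MvPolynomial (Fin n) K)) := by
          ring
        rw [e]
        exact add_mem ihx ihy
    | smul a x hx ih =>
        rw [hΦsmul, Submodule.coe_smul, ← smul_sub]
        exact Submodule.smul_mem _ _ ih
  have hΦO : ∀ f ∈ VO, ((Φ f : VO) : MvPolynomial (Fin n) K) = f := by
    intro f hf
    have h1 := hψ f (hVOVL hf)
    have h2 : f - ((Φ f : VO) : MvPolynomial (Fin n) K) ∈ VO := sub_mem hf (Φ f).2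
    have h3 : f - ((Φ f : VO) : MvPolynomial (Fin n) K) ∈ It ⊓ VO := ⟨h1, h2⟩
    rw [hdisj, Submodule.mem_bot] at h3
    exact (sub_eq_zero.1 h3).symm
  have hΦIt : ∀ f ∈ It, Φ f = 0 := by
    intro f hf
    have h1 := hψ f (hItL hf)
    have h2 : ((Φ f : VO) : MvPolynomial (Fin n) K) ∈ It := by
      have e : ((Φ f : VO) : MvPolynomial (Fin n) K) = f - (f - ((Φ f : VO) : MvPolynomial (Fin n) K)) := by
        ring
      rw [e]
      exact sub_mem hf h1
    have h3 : ((Φ f : VO) : MvPolynomial (Fin n) K) ∈ It ⊓ VO := ⟨h2, (Φ f).2⟩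
    rw [hdisj, Submodule.mem_bot] at h3
    exact Subtype.ext h3
  have hΦI : ∀ f ∈ I, Φ f = 0 := by
    intro f hf
    rw [← hgen] at hf
    induction hf using Submodule.span_induction with
    | mem x h => exact hΦIt x h
    | zero => exact hΦzero
    | add x y hx hy ihx ihy => rw [hΦadd, ihx, ihy, add_zero]
    | smul a x hx ih =>
        rw [smul_eq_mul, hΦmul, ih]
        exact map_zero _
  constructor
  · rw [Submodule.disjoint_def]
    intro x hxI hxO
    have h1 : Φ x = 0 := hΦI x hxI
    have h2 := hΦO x hxO
    rw [h1] at h2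
    simpa using h2.symm
  · rw [codisjoint_iff, eq_top_iff]
    have hItS : It ≤ Submodule.restrictScalars K I ⊔ VO := by
      intro x hx
      apply Submodule.mem_sup_left
      show x ∈ I
      rw [← hgen]
      exact Ideal.subset_span hx
    have hmono : ∀ (d : ℕ) (t : Fin n →₀ ℕ), (t.sum fun _ k => k) = d →
        (monomial t 1 : MvPolynomial (Fin n) K) ∈ Submodule.restrictScalars K I ⊔ VO := by
      intro d
      induction d using Nat.strong_induction_on with
      | _ d ih =>
        intro t htd
        by_cases htO : t ∈ O
        · exact Submodule.mem_sup_right (monomial_mem_monSpan (by exact_mod_cast htO))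
        · have ht0 : t ≠ 0 := fun h => htO (h ▸ h0O)
          obtain ⟨j, hj⟩ : ∃ j, t j ≠ 0 := by
            by_contra hcon
            push_neg at hcon
            exact ht0 (Finsupp.ext hcon)
          set t' := t - Finsupp.single j 1 with ht'def
          have htt' : t' + Finsupp.single j 1 = t := by
            ext i
            rw [Finsupp.add_apply, ht'def, Finsupp.tsub_apply, Finsupp.single_apply]
            by_cases hij : j = i
            · subst hij
              have : 1 ≤ t j := Nat.one_le_iff_ne_zero.2 hj
              simp
              omega
            · simp [hij]
          have hd' : (t'.sum fun _ k => k) + 1 = d := by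
            rw [← htd, ← htt', Finsupp.sum_add_index' (fun _ => rfl) (fun _ _ _ => rfl),
              Finsupp.sum_single_index rfl]
          have hIH := ih (t'.sum fun _ k => k) (by omega) t' rfl
          obtain ⟨a, ha, b, hb, hab⟩ := Submodule.mem_sup.1 hIH
          have hmon : (monomial t (1:K) : MvPolynomial (Fin n) K) = X j * monomial t' 1 := by
            rw [X_mul_monomial', htt']
          rw [hmon, ← hab, mul_add]
          apply Submodule.add_mem
          · apply Submodule.mem_sup_left
            show (X j : MvPolynomial (Fin n) K) * a ∈ I
            exact I.mul_mem_left _ ha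
          · have hXb : (X j : MvPolynomial (Fin n) K) * b ∈ VL := hXO j b hb
            rw [← hsum] at hXb
            exact sup_le hItS le_sup_right hXb
    rintro f -
    induction f using MvPolynomial.induction_on' with
    | monomial u a =>
        have hm := hmono (u.sum fun _ k => k) u rfl
        have h : (monomial u a : MvPolynomial (Fin n) K) = a • monomial u 1 := by
          rw [smul_monomial, smul_eq_mul, mul_one]
        rw [h]
        exact Submodule.smul_mem _ _ hm
    | add p q hp hq => exact Submodule.add_mem _ hp hq
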